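/- Let M be a matroid on ground set E with nullity function η. For 1 ≤ r ≤ η(E), the r-th generalized Hamming weight d_r(M) = min{|X| : η(X) = r} equals the minimum cardinality of a union of r non-redundant circuits of M. -/

import Mathlib

open Set

/-- The rank of a set in a matroid: the largest cardinality of an independent subset. -/
noncomputable def mrank {α : Type*} (M : Matroid α) (X : Set α) : ℕ :=
  sSup {n | ∃ I ⊆ X, M.Indep I ∧ I.ncard = n}

/-- The nullity of a set in a matroid. -/
noncomputable def mnullity {α : Type*} (M : Matroid α) (X : Set α) : ℕ :=
  X.ncard - mrank M X

/-- A circuit of a matroid: a minimal dependent set. -/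
def IsMCircuit {α : Type*} (M : Matroid α) (C : Set α) : Prop :=
  M.Dep C ∧ ∀ D ⊂ C, ¬ M.Dep D

/-- A family of circuits is non-redundant if deleting any member strictly shrinks the union. -/
def NonRedundant {α : Type*} {r : ℕ} (C : Fin r → Set α) : Prop :=
  ∀ j, (⋃ i, ⋃ (_ : i ≠ j), C i) ⊂ ⋃ i, C i

section Aux

variable {α : Type*} {M : Matroid α} [M.Finite]

lemma indep_card_le_basis {X I J : Set α} (hX : X ⊆ M.E) (hI : M.IsBasis I X)
    (hJ : J ⊆ X) (hJi : M.Indep J) : J.ncard ≤ I.ncard := by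
  obtain ⟨J', hJ', hJJ'⟩ := hJi.subset_isBasis_of_subset hJ hX
  have h1 : J.encard ≤ J'.encard := Set.encard_mono hJJ'
  have h2 : J'.encard = I.encard := hJ'.encard_eq_encard hI
  have hIfin : I.Finite := M.set_finite I (hI.indep.subset_ground)
  rw [h2] at h1
  rw [Set.ncard, Set.ncard]
  exact ENat.toNat_le_toNat h1 (by simpa using hIfin.encard_lt_top.ne)

lemma mrank_eq_basis {X I : Set α} (hX : X ⊆ M.E) (hI : M.IsBasis I X) :
    mrank M X = I.ncard := by
  have hbdd : ∀ n ∈ {n | ∃ J ⊆ X, M.Indep J ∧ J.ncard = n}, n ≤ I.ncard := by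
    rintro n ⟨J, hJX, hJi, rfl⟩
    exact indep_card_le_basis hX hI hJX hJi
  refine le_antisymm (csSup_le ⟨I.ncard, I, hI.subset, hI.indep, rfl⟩ hbdd) ?_
  exact le_csSup ⟨I.ncard, hbdd⟩ ⟨I, hI.subset, hI.indep, rfl⟩

lemma mnullity_eq_basis {X I : Set α} (hX : X ⊆ M.E) (hI : M.IsBasis I X) :
    mnullity M X = (X \ I).ncard := by
  rw [mnullity, mrank_eq_basis hX hI,
    Set.ncard_diff hI.subset (M.set_finite I hI.indep.subset_ground)]

lemma mrank_le_ncard {X : Set α} (hX : X ⊆ M.E) : mrank M X ≤ X.ncard := by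
  obtain ⟨I, hI⟩ := M.exists_isBasis X hX
  rw [mrank_eq_basis hX hI]
  exact Set.ncard_le_ncard hI.subset (M.set_finite X hX)

lemma mrank_mono {X Y : Set α} (hXY : X ⊆ Y) (hY : Y ⊆ M.E) :
    mrank M X ≤ mrank M Y := by
  obtain ⟨I, J, hI, hJ, hIJ⟩ := M.exists_isBasis_subset_isBasis hXY hY
  rw [mrank_eq_basis (hXY.trans hY) hI, mrank_eq_basis hY hJ]
  exact Set.ncard_le_ncard hIJ (M.set_finite J hJ.indep.subset_ground)

lemma mnullity_mono {X Y : Set α} (hXY : X ⊆ Y) (hY : Y ⊆ M.E) :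
    mnullity M X ≤ mnullity M Y := by
  obtain ⟨I, hI⟩ := M.exists_isBasis X (hXY.trans hY)
  obtain ⟨J, hJ, hJX⟩ := hI.exists_isBasis_inter_eq_of_superset hXY hY
  rw [mnullity_eq_basis (hXY.trans hY) hI, mnullity_eq_basis hY hJ]
  refine Set.ncard_le_ncard ?_ (M.set_finite Y hY).diff
  intro x hx
  refine ⟨hXY hx.1, fun hxJ => hx.2 ?_⟩
  rw [← hJX]; exact ⟨hxJ, hx.1⟩

/-- Intermediate value for nullity. -/
lemma exists_mnullity_eq {k : ℕ} :
    ∀ (n : ℕ) (X : Set α), X.ncard = n → X ⊆ M.E → k ≤ mnullity M X →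
      ∃ Y ⊆ X, mnullity M Y = k := by
  intro n
  induction n using Nat.strong_induction_on with
  | _ n IH =>
    intro X hn hX hk
    rcases eq_or_lt_of_le hk with heq | hlt
    · exact ⟨X, Subset.rfl, heq.symm⟩
    obtain ⟨I, hI⟩ := M.exists_isBasis X hX
    have hnull := mnullity_eq_basis hX hI
    have hne : (X \ I).Nonempty := by
      rw [Set.nonempty_iff_ne_empty]
      intro h
      rw [hnull, h, Set.ncard_empty] at hlt
      omega
    obtain ⟨e, he⟩ := hne
    have hXfin : X.Finite := M.set_finite X hX
    have heX : e ∈ X := he.1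
    have hI' : M.IsBasis I (X \ {e}) :=
      hI.isBasis_subset (Set.subset_diff_singleton hI.subset (fun h => he.2 h))
        Set.diff_subset
    have hnull' : mnullity M (X \ {e}) = mnullity M X - 1 := by
      rw [mnullity_eq_basis (Set.diff_subset.trans hX) hI', hnull,
        Set.diff_diff_comm, Set.ncard_diff_singleton_of_mem he]
    have hcard : (X \ {e}).ncard < n := by
      rw [← hn]
      exact Set.ncard_lt_ncard (Set.sdiff_singleton_ssubset.mpr heX) hXfin
    obtain ⟨Y, hYX, hY⟩ := IH _ hcard (X \ {e}) rfl (Set.diff_subset.trans hX)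
      (by omega)
    exact ⟨Y, hYX.trans Set.diff_subset, hY⟩

/-- Every dependent set contains a circuit. -/
lemma exists_circuit_subset {X : Set α} (hX : M.Dep X) :
    ∃ C ⊆ X, IsMCircuit M C := by
  have hXfin : X.Finite := M.set_finite X hX.subset_ground
  obtain ⟨n, hn⟩ : ∃ n, X.ncard = n := ⟨_, rfl⟩
  induction n using Nat.strong_induction_on generalizing X with
  | _ n IH =>
    by_cases h : ∀ D ⊂ X, ¬ M.Dep D
    · exact ⟨X, Subset.rfl, hX, h⟩
    push_neg at h
    obtain ⟨D, hDX, hD⟩ := h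
    obtain ⟨C, hCD, hC⟩ := IH D.ncard (hn ▸ Set.ncard_lt_ncard hDX hXfin) hD
      (hXfin.subset hDX.subset) rfl
    exact ⟨C, hCD.trans hDX.subset, hC⟩

/-- Fundamental circuit. -/
lemma exists_fund_circuit {X I : Set α} (hX : X ⊆ M.E) (hI : M.IsBasis I X)
    {e : α} (he : e ∈ X \ I) :
    ∃ C, IsMCircuit M C ∧ C ⊆ insert e I ∧ e ∈ C := by
  have hdep : M.Dep (insert e I) := by
    rw [hI.indep.insert_dep_iff]
    exact ⟨hI.subset_closure he.1, he.2⟩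
  obtain ⟨C, hCsub, hC⟩ := exists_circuit_subset hdep
  refine ⟨C, hC, hCsub, ?_⟩
  by_contra heC
  have hCI : C ⊆ I := by
    intro x hx
    rcases hCsub hx with rfl | h
    · exact absurd hx heC
    · exact h
  exact hC.1.not_indep (hI.indep.subset hCI)

/-- Deleting an element of a circuit contained in `X` does not change the rank. -/
lemma mrank_diff_of_circuit {X C : Set α} (hX : X ⊆ M.E) (hC : IsMCircuit M C)
    (hCX : C ⊆ X) {e : α} (he : e ∈ C) :
    mrank M X = mrank M (X \ {e}) := by
  refine le_antisymm ?_ (mrank_mono Set.diff_subset hX)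
  obtain ⟨I, hI⟩ := M.exists_isBasis (X \ {e}) (Set.diff_subset.trans hX)
  have hCe : M.Indep (C \ {e}) := by
    rw [← M.not_dep_iff (Set.diff_subset.trans hC.1.subset_ground)]
    exact hC.2 _ (Set.sdiff_singleton_ssubset.mpr he)
  have hins : insert e (C \ {e}) = C := Set.insert_diff_singleton.trans
    (Set.insert_eq_of_mem he)
  have hecl : e ∈ M.closure (C \ {e}) := by
    have : M.Dep (insert e (C \ {e})) := by rw [hins]; exact hC.1
    rw [hCe.insert_dep_iff] at this
    exact this.1
  have hXcl : X ⊆ M.closure (X \ {e}) := by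
    intro x hx
    by_cases hxe : x = e
    · subst hxe
      exact M.closure_mono (Set.diff_subset_diff_left hCX) hecl
    · exact M.subset_closure (X \ {e}) (Set.diff_subset.trans hX) ⟨hx, hxe⟩
  have hIX : M.IsBasis I X := hI.indep.isBasis_of_subset_of_subset_closure
    (hI.subset.trans Set.diff_subset)
    (hXcl.trans (by rw [hI.closure_eq_closure]))
  rw [mrank_eq_basis hX hIX, mrank_eq_basis (Set.diff_subset.trans hX) hI]

/-- Nullity of union of circuits with private elements. -/
lemma le_mnullity_iUnion :
    ∀ (m : ℕ) (C : Fin m → Set α) (e : Fin m → α),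
      (∀ i, IsMCircuit M (C i)) → (∀ j, e j ∈ C j) →
      (∀ i j, i ≠ j → e j ∉ C i) → m ≤ mnullity M (⋃ i, C i) := by
  intro m
  induction m with
  | zero => intro _ _ _ _ _; exact Nat.zero_le _
  | succ m IH =>
    intro C e hC he hpriv
    set U : Set α := ⋃ i, C i with hU
    have hUE : U ⊆ M.E := Set.iUnion_subset fun i => (hC i).1.subset_ground
    have hUfin : U.Finite := M.set_finite U hUE
    set a : α := e (Fin.last m) with ha
    have haU : a ∈ U := Set.mem_iUnion.mpr ⟨Fin.last m, he _⟩
    have hIH : m ≤ mnullity M (⋃ i : Fin m, C i.castSucc) :=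
      IH (fun i => C i.castSucc) (fun i => e i.castSucc)
        (fun i => hC _) (fun i => he _)
        (fun i j hij => hpriv _ _ (by simpa using hij))
    have hsub : (⋃ i : Fin m, C i.castSucc) ⊆ U \ {a} := by
      rintro x hx
      obtain ⟨i, hi⟩ := Set.mem_iUnion.mp hx
      refine ⟨Set.mem_iUnion.mpr ⟨_, hi⟩, fun hxa => ?_⟩
      rw [Set.mem_singleton_iff] at hxa
      subst hxa
      exact hpriv i.castSucc (Fin.last m) (Fin.castSucc_lt_last i).ne hi
    have hrk : mrank M U = mrank M (U \ {a}) :=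
      mrank_diff_of_circuit hUE (hC (Fin.last m))
        (Set.subset_iUnion C (Fin.last m)) (he (Fin.last m))
    have hcard : U.ncard = (U \ {a}).ncard + 1 :=
      (Set.ncard_diff_singleton_add_one haU hUfin).symm
    have hrkle : mrank M (U \ {a}) ≤ (U \ {a}).ncard :=
      mrank_le_ncard (Set.diff_subset.trans hUE)
    have hstep : mnullity M U = mnullity M (U \ {a}) + 1 := by
      rw [mnullity, mnullity, hrk, hcard, Nat.succ_sub hrkle]
    have hmono : mnullity M (⋃ i : Fin m, C i.castSucc) ≤ mnullity M (U \ {a}) :=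
      mnullity_mono hsub (Set.diff_subset.trans hUE)
    omega

end Aux

theorem stmt5 {α : Type*} (M : Matroid α) [M.Finite] (r : ℕ) (hr : 1 ≤ r)
    (hrn : r ≤ mnullity M M.E) :
    sInf {n | ∃ X ⊆ M.E, mnullity M X = r ∧ X.ncard = n} =
      sInf {n | ∃ C : Fin r → Set α, (∀ i, IsMCircuit M (C i)) ∧ NonRedundant C ∧
        (⋃ i, C i).ncard = n} := by
  set S := {n | ∃ X ⊆ M.E, mnullity M X = r ∧ X.ncard = n} with hS
  set T := {n | ∃ C : Fin r → Set α, (∀ i, IsMCircuit M (C i)) ∧ NonRedundant C ∧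
      (⋃ i, C i).ncard = n} with hT
  -- S is nonempty
  have hSne : S.Nonempty := by
    obtain ⟨Y, hYE, hY⟩ := exists_mnullity_eq M.E.ncard M.E rfl Subset.rfl hrn
    exact ⟨Y.ncard, Y, hYE, hY, rfl⟩
  -- from any element of S we get an element of T that is ≤ it
  have hST : ∀ n ∈ S, ∃ m ∈ T, m ≤ n := by
    rintro n ⟨X, hXE, hXnull, rfl⟩
    have hXfin : X.Finite := M.set_finite X hXE
    obtain ⟨I, hI⟩ := M.exists_isBasis X hXE
    have hcard : (X \ I).ncard = r := by
      rw [← mnullity_eq_basis hXE hI, hXnull]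
    have hdfin : (X \ I).Finite := hXfin.diff
    have htf : hdfin.toFinset.card = r := by
      rwa [Set.ncard_eq_toFinset_card _ hdfin] at hcard
    -- enumerate X \ I
    let g : Fin r → α := fun i => (hdfin.toFinset.equivFin.symm (Fin.cast htf.symm i) : α)
    have hgmem : ∀ i, g i ∈ X \ I := fun i => by
      have := (hdfin.toFinset.equivFin.symm (Fin.cast htf.symm i)).2
      rwa [Set.Finite.mem_toFinset] at this
    have hginj : Function.Injective g := by
      intro i j hij
      have := Subtype.ext hij
      have := hdfin.toFinset.equivFin.symm.injective this
      simpa [Fin.ext_iff] using congrArg Fin.val this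
    -- fundamental circuits
    have hCex : ∀ i : Fin r, ∃ C, IsMCircuit M C ∧ C ⊆ insert (g i) I ∧ g i ∈ C :=
      fun i => exists_fund_circuit hXE hI (hgmem i)
    choose D hD hDsub hDmem using hCex
    have hDX : ∀ i, D i ⊆ X := fun i =>
      (hDsub i).trans (Set.insert_subset (hgmem i).1 hI.subset)
    have hpriv : ∀ i j, i ≠ j → g j ∉ D i := by
      intro i j hij hmem
      rcases (hDsub i) hmem with h | h
      · exact hij (hginj h).symm
      · exact (hgmem j).2 h
    have hNR : NonRedundant D := by
      intro j
      constructor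
      · exact Set.iUnion_subset fun i => Set.iUnion_subset fun _ =>
          Set.subset_iUnion D i
      · intro hcon
        have : g j ∈ ⋃ i, ⋃ (_ : i ≠ j), D i :=
          hcon (Set.mem_iUnion.mpr ⟨j, hDmem j⟩)
        obtain ⟨i, hi⟩ := Set.mem_iUnion.mp this
        obtain ⟨hij, hmem⟩ := Set.mem_iUnion.mp hi
        exact hpriv i j hij hmem
    refine ⟨(⋃ i, D i).ncard, ⟨D, hD, hNR, rfl⟩, ?_⟩
    exact Set.ncard_le_ncard (Set.iUnion_subset hDX) hXfin
  -- from any element of T we get an element of S that is ≤ it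
  have hTS : ∀ m ∈ T, ∃ n ∈ S, n ≤ m := by
    rintro m ⟨C, hC, hNR, rfl⟩
    set U : Set α := ⋃ i, C i with hU
    have hUE : U ⊆ M.E := Set.iUnion_subset fun i => (hC i).1.subset_ground
    -- extract private elements from non-redundancy
    have hgex : ∀ j : Fin r, ∃ x, x ∈ C j ∧ ∀ i, i ≠ j → x ∉ C i := by
      intro j
      obtain ⟨x, hxU, hxn⟩ := Set.exists_of_ssubset (hNR j)
      obtain ⟨i, hi⟩ := Set.mem_iUnion.mp hxU
      have hij : i = j := by
        by_contra hne
        exact hxn (Set.mem_iUnion.mpr ⟨i, Set.mem_iUnion.mpr ⟨hne, hi⟩⟩)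
      subst hij
      exact ⟨x, hi, fun k hk hmem =>
        hxn (Set.mem_iUnion.mpr ⟨k, Set.mem_iUnion.mpr ⟨hk, hmem⟩⟩)⟩
    choose g hg1 hg2 using hgex
    have hrU : r ≤ mnullity M U :=
      le_mnullity_iUnion r C g hC hg1 (fun i j => hg2 j i)
    obtain ⟨Y, hYU, hY⟩ := exists_mnullity_eq U.ncard U rfl hUE hrU
    refine ⟨Y.ncard, ⟨Y, hYU.trans hUE, hY, rfl⟩, ?_⟩
    exact Set.ncard_le_ncard hYU (M.set_finite U hUE)
  have hTne : T.Nonempty := by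
    obtain ⟨n, hn⟩ := hSne
    obtain ⟨m, hm, _⟩ := hST n hn
    exact ⟨m, hm⟩
  apply le_antisymm
  · obtain ⟨n, hn, hle⟩ := hTS (sInf T) (Nat.sInf_mem hTne)
    exact le_trans (Nat.sInf_le hn) hle
  · obtain ⟨m, hm, hle⟩ := hST (sInf S) (Nat.sInf_mem hSne)
    exact le_trans (Nat.sInf_le hm) hle
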